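/- Let C be a small category and let a commutative square of presheaves on C be given, with top edge α : F' ⟶ F, left edge φ' : F' ⟶ G', right edge φ : F ⟶ G, and bottom edge β : G' ⟶ G. Suppose the induced functors on categories of elements admit right adjoints, ∫φ ⊣ R and ∫φ' ⊣ R' (with unit η and counit ε' respectively). Note that ∫α ⋙ ∫φ = ∫φ' ⋙ ∫β strictly, by commutativity of the square. Let μ : R' ⋙ ∫α ⟶ ∫β ⋙ R be the canonical mate transformation, given as the composite R' ⋙ ∫α ⟶ R' ⋙ ∫α ⋙ ∫φ ⋙ R = R' ⋙ ∫φ' ⋙ ∫β ⋙ R ⟶ ∫β ⋙ R obtained from the unit η of ∫φ ⊣ R followed by the counit ε' of ∫φ' ⊣ R'. Then the square is a pullback square in the category of presheaves on C if and only if μ is a natural isomorphism (the Beck–Chevalley condition). -/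

import Mathlib

open CategoryTheory CategoryTheory.Limits Opposite

universe u

/-- The category of elements of a presheaf `F : Cᵒᵖ ⥤ Type u`, with objects pairs
`(c, x ∈ F(c))` and morphisms `(c, x) ⟶ (d, y)` the morphisms `f : c ⟶ d` of `C` with
`F(f)(y) = x`. -/
structure PElt {C : Type u} [SmallCategory C] (F : Cᵒᵖ ⥤ Type u) : Type u where
  base : C
  elt : F.obj (op base)

namespace PElt

variable {C : Type u} [SmallCategory C]

instance (F : Cᵒᵖ ⥤ Type u) : Category (PElt F) where
  Hom x y := { f : x.base ⟶ y.base // F.map f.op y.elt = x.elt }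
  id x := ⟨𝟙 x.base, by rw [op_id, FunctorToTypes.map_id_apply]⟩
  comp {x y z} f g := ⟨f.1 ≫ g.1, by rw [op_comp, FunctorToTypes.map_comp_apply, g.2, f.2]⟩
  id_comp f := Subtype.ext (Category.id_comp f.1)
  comp_id f := Subtype.ext (Category.comp_id f.1)
  assoc f g h := Subtype.ext (Category.assoc f.1 g.1 h.1)

/-- The functor `∫φ : ∫F ⥤ ∫G` on categories of elements induced by a morphism of
presheaves `φ : F ⟶ G`, sending `(c, x)` to `(c, φ_c(x))`. -/
def map {F G : Cᵒᵖ ⥤ Type u} (φ : F ⟶ G) : PElt F ⥤ PElt G where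
  obj x := ⟨x.base, φ.app _ x.elt⟩
  map {x y} f := ⟨f.1, by rw [← FunctorToTypes.naturality, f.2]⟩
  map_id _ := rfl
  map_comp _ _ := rfl

/-- The projection `π : ∫F ⥤ C` from the category of elements of a presheaf. -/
def proj (F : Cᵒᵖ ⥤ Type u) : PElt F ⥤ C where
  obj x := x.base
  map f := f.1
  map_id _ := rfl
  map_comp _ _ := rfl

theorem map_comp' {F G H : Cᵒᵖ ⥤ Type u} (φ : F ⟶ G) (ψ : G ⟶ H) :
    PElt.map (φ ≫ ψ) = PElt.map φ ⋙ PElt.map ψ := rfl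

end PElt

section Aux
variable {C : Type u} [SmallCategory C]

lemma pelt_hom_ext {F : Cᵒᵖ ⥤ Type u} {x y : PElt F} {f g : x ⟶ y} (h : f.1 = g.1) : f = g :=
  Subtype.ext h

lemma pelt_eqToHom_val {F : Cᵒᵖ ⥤ Type u} {a b : PElt F} (h : a = b) :
    (eqToHom h).1 = eqToHom (congrArg PElt.base h) := by subst h; rfl

lemma homEquiv_val {F G : Cᵒᵖ ⥤ Type u} {φ : F ⟶ G} {R : PElt G ⥤ PElt F}
    (adj : PElt.map φ ⊣ R) {x : PElt F} {z : PElt G} (h : (PElt.map φ).obj x ⟶ z) :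
    (adj.homEquiv x z h).1 ≫ (adj.counit.app z).1 = h.1 := by
  have e1 : (PElt.map φ).map (adj.homEquiv x z h) ≫ adj.counit.app z = h :=
    (adj.homEquiv_counit (g := adj.homEquiv x z h)).symm.trans
      ((adj.homEquiv x z).symm_apply_apply h)
  exact congrArg Subtype.val e1

lemma hom_to_R_ext {F G : Cᵒᵖ ⥤ Type u} {φ : F ⟶ G} {R : PElt G ⥤ PElt F}
    (adj : PElt.map φ ⊣ R) {x : PElt F} {z : PElt G} {p q : x ⟶ R.obj z}
    (h : p.1 ≫ (adj.counit.app z).1 = q.1 ≫ (adj.counit.app z).1) : p = q := by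
  apply (adj.homEquiv x z).symm.injective
  rw [Adjunction.homEquiv_counit, Adjunction.homEquiv_counit]
  exact Subtype.ext h

end Aux

section Ptwise
variable {C : Type u} [SmallCategory C]
variable {F F' G G' : Cᵒᵖ ⥤ Type u}
  (α : F' ⟶ F) (φ' : F' ⟶ G') (φ : F ⟶ G) (β : G' ⟶ G)

/-- Pointwise unique-lifting property of the square. -/
def BCPtwise : Prop := ∀ (c : Cᵒᵖ) (f : F.obj c) (g' : G'.obj c),
  φ.app c f = β.app c g' → ∃! f' : F'.obj c, α.app c f' = f ∧ φ'.app c f' = g'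

lemma ptwise_of_isPullback (h : IsPullback α φ' φ β) : BCPtwise α φ' φ β := by
  intro c f g' hc
  have h1 : IsPullback (α.app c) (φ'.app c) (φ.app c) (β.app c) :=
    h.map ((evaluation Cᵒᵖ (Type u)).obj c)
  have h2 := (PullbackCone.isLimitEquivBijective _) h1.isLimit
  obtain ⟨x, hx⟩ := h2.2 ⟨(f, g'), hc⟩
  refine ⟨x, ⟨congrArg (fun p => p.1.1) hx, congrArg (fun p => p.1.2) hx⟩, ?_⟩
  intro y hy
  apply h2.1
  rw [hx]
  exact Subtype.ext (Prod.ext hy.1 hy.2)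

lemma isPullback_of_ptwise (hsq : α ≫ φ = φ' ≫ β) (h : BCPtwise α φ' φ β) :
    IsPullback α φ' φ β := by
  refine ⟨⟨hsq⟩, ⟨?_⟩⟩
  refine evaluationJointlyReflectsLimits _ fun c => ?_
  refine (isLimitMapConePullbackConeEquiv ((evaluation Cᵒᵖ (Type u)).obj c) hsq).symm ?_
  refine (PullbackCone.isLimitEquivBijective _).symm ?_
  constructor
  · intro x y hxy
    obtain ⟨z, hz, huniq⟩ := h c (α.app c x) (φ'.app c x) (ConcreteCategory.congr_hom (congr_app hsq c) x)
    have hx1 : α.app c y = α.app c x := congrArg (fun p => p.1.1) hxy.symm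
    have hx2 : φ'.app c y = φ'.app c x := congrArg (fun p => p.1.2) hxy.symm
    rw [huniq x ⟨rfl, rfl⟩, huniq y ⟨hx1, hx2⟩]
  · intro z
    obtain ⟨x, hx, -⟩ := h c z.1.1 z.1.2 z.2
    exact ⟨x, Subtype.ext (Prod.ext hx.1 hx.2)⟩

end Ptwise

section Mate
variable {C : Type u} [SmallCategory C]
variable {F F' G G' : Cᵒᵖ ⥤ Type u}
  {α : F' ⟶ F} {φ' : F' ⟶ G'} {φ : F ⟶ G} {β : G' ⟶ G}
  {R : PElt G ⥤ PElt F} {R' : PElt G' ⥤ PElt F'}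
  (adj : PElt.map φ ⊣ R) (adj' : PElt.map φ' ⊣ R')
  (heq : PElt.map α ⋙ PElt.map φ = PElt.map φ' ⋙ PElt.map β)

lemma adjunct_exists {F G : Cᵒᵖ ⥤ Type u} {φ : F ⟶ G} {R : PElt G ⥤ PElt F}
    (adj : PElt.map φ ⊣ R) {x : PElt F} {z : PElt G} (h : (PElt.map φ).obj x ⟶ z) :
    ∃ k : x.base ⟶ (R.obj z).base,
      F.map k.op (R.obj z).elt = x.elt ∧ k ≫ (adj.counit.app z).1 = h.1 :=
  ⟨(adj.homEquiv x z h).1, (adj.homEquiv x z h).2, homEquiv_val adj h⟩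

lemma mate_val (y' : PElt G') :
    ((mateEquiv adj' adj (eqToHom heq)).app y').1 ≫
        (adj.counit.app ((PElt.map β).obj y')).1 = (adj'.counit.app y').1 := by
  have h := congrArg Subtype.val (mateEquiv_counit adj' adj (eqToHom heq) y')
  have h3 : ((eqToHom heq).app (R'.obj y')).1 = 𝟙 (R'.obj y').base := by
    rw [eqToHom_app, pelt_eqToHom_val]
    exact eqToHom_refl _ _
  refine Eq.trans ?_ (Eq.trans h ?_)
  · rfl
  · show ((eqToHom heq).app (R'.obj y')).1 ≫ (adj'.counit.app y').1 = _
    rw [h3]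
    exact Category.id_comp _

end Mate

lemma bc_aux {C : Type u} [SmallCategory C] {F F' G G' : Cᵒᵖ ⥤ Type u}
    (α : F' ⟶ F) (φ' : F' ⟶ G') (φ : F ⟶ G) (β : G' ⟶ G)
    (hsq : α ≫ φ = φ' ≫ β)
    (R : PElt G ⥤ PElt F) (R' : PElt G' ⥤ PElt F')
    (adj : PElt.map φ ⊣ R) (adj' : PElt.map φ' ⊣ R')
    (heq : PElt.map α ⋙ PElt.map φ = PElt.map φ' ⋙ PElt.map β) :
    IsPullback α φ' φ β ↔ IsIso (mateEquiv adj' adj (eqToHom heq)) := by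
  constructor
  · intro hpb
    have hpt := ptwise_of_isPullback α φ' φ β hpb
    have key : ∀ y' : PElt G', IsIso ((mateEquiv adj' adj (eqToHom heq)).app y') := by
      intro y'
      set μa := (mateEquiv adj' adj (eqToHom heq)).app y' with hμa
      have hμw : μa.1 ≫ (adj.counit.app ((PElt.map β).obj y')).1 = (adj'.counit.app y').1 :=
        mate_val adj adj' heq y'
      -- notation for counit components
      have hv : G'.map (adj'.counit.app y').1.op y'.elt = φ'.app _ (R'.obj y').elt :=
        (adj'.counit.app y').2
      have hw : G.map (adj.counit.app ((PElt.map β).obj y')).1.op (β.app _ y'.elt)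
          = φ.app _ (R.obj ((PElt.map β).obj y')).elt :=
        (adj.counit.app ((PElt.map β).obj y')).2
      -- the pointwise lift over the base of R(βy')
      obtain ⟨fb, ⟨hfb1, hfb2⟩, -⟩ := hpt (op (R.obj ((PElt.map β).obj y')).base)
        (R.obj ((PElt.map β).obj y')).elt
        (G'.map (adj.counit.app ((PElt.map β).obj y')).1.op y'.elt)
        (hw.symm.trans (FunctorToTypes.naturality β _ y'.elt).symm)
      -- adjunct of the comparison morphism
      obtain ⟨k1, hk2, hkv⟩ := adjunct_exists adj'
        (x := ⟨(R.obj ((PElt.map β).obj y')).base, fb⟩) (z := y')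
        ⟨(adj.counit.app ((PElt.map β).obj y')).1, hfb2.symm⟩
      have hkv' : k1 ≫ (adj'.counit.app y').1 = (adj.counit.app ((PElt.map β).obj y')).1 := hkv
      -- candidate inverse
      have hinv : F.map k1.op (α.app _ (R'.obj y').elt) = (R.obj ((PElt.map β).obj y')).elt := by
        rw [← FunctorToTypes.naturality, hk2]
        exact hfb1
      refine ⟨⟨⟨k1, hinv⟩, ?_, ?_⟩⟩
      · -- μa ≫ inv = 𝟙
        have ht2 : (μa.1 ≫ k1) ≫ (adj'.counit.app y').1 = (adj'.counit.app y').1 := by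
          erw [Category.assoc, hkv']
          exact hμw
        have ht1 : F.map (μa.1 ≫ k1).op (α.app _ (R'.obj y').elt) = α.app _ (R'.obj y').elt :=
          (μa ≫ (⟨k1, hinv⟩ : R.obj ((PElt.map β).obj y') ⟶
            (PElt.map α).obj (R'.obj y'))).2
        obtain ⟨z, hz, hzu⟩ := hpt (op (R'.obj y').base)
          (α.app _ (R'.obj y').elt) (φ'.app _ (R'.obj y').elt)
          (ConcreteCategory.congr_hom (congr_app hsq (op (R'.obj y').base)) (R'.obj y').elt)
        have c1 : α.app _ (F'.map (μa.1 ≫ k1).op (R'.obj y').elt) = α.app _ (R'.obj y').elt :=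
          (FunctorToTypes.naturality α _ _).trans ht1
        have c2 : φ'.app _ (F'.map (μa.1 ≫ k1).op (R'.obj y').elt)
            = φ'.app _ (R'.obj y').elt := by
          erw [FunctorToTypes.naturality, ← hv, ← FunctorToTypes.map_comp_apply, ← op_comp, ht2]
          rfl
        have hteq : F'.map (μa.1 ≫ k1).op (R'.obj y').elt = (R'.obj y').elt :=
          (hzu _ ⟨c1, c2⟩).trans (hzu _ ⟨rfl, rfl⟩).symm
        have hτ : (⟨μa.1 ≫ k1, hteq⟩ : R'.obj y' ⟶ R'.obj y') = 𝟙 (R'.obj y') := by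
          apply hom_to_R_ext adj'
          show (μa.1 ≫ k1) ≫ _ = 𝟙 (R'.obj y').base ≫ _
          erw [ht2, Category.id_comp]
        have hτv : μa.1 ≫ k1 = 𝟙 (R'.obj y').base := congrArg Subtype.val hτ
        exact pelt_hom_ext hτv
      · -- inv ≫ μa = 𝟙
        apply hom_to_R_ext adj
        show (k1 ≫ μa.1) ≫ _ = 𝟙 (R.obj ((PElt.map β).obj y')).base ≫ _
        erw [Category.assoc, hμw, hkv', Category.id_comp]
    exact NatIso.isIso_of_isIso_app _
  · intro hiso
    apply isPullback_of_ptwise α φ' φ β hsq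
    intro c f g' hcond
    set y' : PElt G' := ⟨c.unop, g'⟩ with hy'
    set μa := (mateEquiv adj' adj (eqToHom heq)).app y' with hμa
    haveI : IsIso μa := NatIso.isIso_app_of_isIso _ y'
    have hμw : μa.1 ≫ (adj.counit.app ((PElt.map β).obj y')).1 = (adj'.counit.app y').1 :=
      mate_val adj adj' heq y'
    have hv : G'.map (adj'.counit.app y').1.op y'.elt = φ'.app _ (R'.obj y').elt :=
      (adj'.counit.app y').2
    have hμs : μa.1 ≫ (inv μa).1 = 𝟙 (R'.obj y').base :=
      congrArg Subtype.val (IsIso.hom_inv_id μa)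
    have hsμ : (inv μa).1 ≫ μa.1 = 𝟙 (R.obj ((PElt.map β).obj y')).base :=
      congrArg Subtype.val (IsIso.inv_hom_id μa)
    have hs2 : F.map (inv μa).1.op (α.app _ (R'.obj y').elt)
        = (R.obj ((PElt.map β).obj y')).elt := (inv μa).2
    have hsv : (inv μa).1 ≫ (adj'.counit.app y').1 = (adj.counit.app ((PElt.map β).obj y')).1 := by
      erw [← hμw, ← Category.assoc, hsμ]
      exact Category.id_comp _
    -- the adjunct of the map (c,f) → β y'
    have hmpf : G.map (𝟙 c.unop).op (((PElt.map β).obj y').elt)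
        = φ.app _ ((⟨c.unop, f⟩ : PElt F).elt) := by
      erw [op_id, FunctorToTypes.map_id_apply]
      exact hcond.symm
    obtain ⟨p1, hp2, hp1⟩ := adjunct_exists adj (x := ⟨c.unop, f⟩) (z := (PElt.map β).obj y')
      ⟨𝟙 c.unop, hmpf⟩
    have hp1' : p1 ≫ (adj.counit.app ((PElt.map β).obj y')).1 = 𝟙 c.unop := hp1
    have hq2 : F.map (p1 ≫ (inv μa).1).op (α.app _ (R'.obj y').elt) = f := by
      rw [op_comp, FunctorToTypes.map_comp_apply, hs2]
      exact hp2
    have hqv : (p1 ≫ (inv μa).1) ≫ (adj'.counit.app y').1 = 𝟙 c.unop := by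
      erw [Category.assoc, hsv]
      exact hp1'
    refine ⟨F'.map (p1 ≫ (inv μa).1).op (R'.obj y').elt, ⟨?_, ?_⟩, ?_⟩
    · exact (FunctorToTypes.naturality α _ _).trans hq2
    · show φ'.app _ (F'.map (p1 ≫ (inv μa).1).op (R'.obj y').elt) = g'
      erw [FunctorToTypes.naturality]
      show G'.map (p1 ≫ (inv μa).1).op (φ'.app (op (R'.obj y').base) (R'.obj y').elt) = g'
      erw [← hv, ← FunctorToTypes.map_comp_apply, ← op_comp, hqv, op_id]
      exact FunctorToTypes.map_id_apply _ _
    · rintro f'' ⟨hu1, hu2⟩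
      have hmpf'' : G'.map (𝟙 c.unop).op y'.elt
          = φ'.app _ ((⟨c.unop, f''⟩ : PElt F').elt) := by
        rw [op_id, FunctorToTypes.map_id_apply]
        exact hu2.symm
      obtain ⟨r1, hr2, hr1⟩ := adjunct_exists adj' (x := ⟨c.unop, f''⟩) (z := y')
        ⟨𝟙 c.unop, hmpf''⟩
      have hr1' : r1 ≫ (adj'.counit.app y').1 = 𝟙 c.unop := hr1
      have hρpf : F.map r1.op (α.app _ (R'.obj y').elt) = f := by
        rw [← FunctorToTypes.naturality, hr2]
        exact hu1
      have hρμ : (⟨r1, hρpf⟩ : (⟨c.unop, f⟩ : PElt F) ⟶ (PElt.map α).obj (R'.obj y')) ≫ μa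
          = ⟨p1, hp2⟩ := by
        apply hom_to_R_ext adj
        show (r1 ≫ μa.1) ≫ _ = p1 ≫ _
        erw [Category.assoc, hμw, hr1', hp1']
      have h2 : r1 ≫ μa.1 = p1 := congrArg Subtype.val hρμ
      have hr2' : F'.map r1.op (R'.obj y').elt = f'' := hr2
      have hval : r1 = p1 ≫ (inv μa).1 := by
        erw [← h2, Category.assoc, hμs, Category.comp_id]
      rw [← hr2', hval]
      rfl

/-- Beck–Chevalley: a commutative square of presheaves (top `α`, left `φ'`, right `φ`,
bottom `β`) whose vertical maps are representable (with right adjoints `R`, `R'` of the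
induced functors on categories of elements) is a pullback iff the canonical mate
`R' ⋙ ∫α ⟶ ∫β ⋙ R` (unit of `∫φ ⊣ R`, then the strict equality
`∫α ⋙ ∫φ = ∫φ' ⋙ ∫β`, then counit of `∫φ' ⊣ R'`) is a natural isomorphism. -/
theorem isPullback_iff_beck_chevalley {C : Type u} [SmallCategory C]
    {F F' G G' : Cᵒᵖ ⥤ Type u}
    (α : F' ⟶ F) (φ' : F' ⟶ G') (φ : F ⟶ G) (β : G' ⟶ G)
    (hsq : α ≫ φ = φ' ≫ β)
    (R : PElt G ⥤ PElt F) (R' : PElt G' ⥤ PElt F')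
    (adj : PElt.map φ ⊣ R) (adj' : PElt.map φ' ⊣ R') :
    IsPullback α φ' φ β ↔
      IsIso (mateEquiv adj' adj (eqToHom
        (show PElt.map α ⋙ PElt.map φ = PElt.map φ' ⋙ PElt.map β by
          rw [← PElt.map_comp', ← PElt.map_comp', hsq]))) :=
  bc_aux α φ' φ β hsq R R' adj adj' _
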